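/- Let L be a Hermitian n×n complex matrix, let γ be a rank-one projector and Γ a density matrix on ℂⁿ. Then |−4·tr(LγLΓ) + 2·tr(Γ(Lγ+γL))·(tr(ΓL)+tr(γL)) − 4·tr(Γγ)·tr(ΓL)·tr(γL)| ≤ 20·‖L‖²·tr((I−γ)Γ). -/

import Mathlib

open Matrix ComplexOrder

/-- The operator norm of a matrix induced by the Euclidean norm on `ℂⁿ`. -/
noncomputable def euclideanOpNorm {n : ℕ} (L : Matrix (Fin n) (Fin n) ℂ) : ℝ :=
  ‖Matrix.toEuclideanCLM (𝕜 := ℂ) L‖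

namespace Aux

variable {m : ℕ}





lemma dot_toCLM (M : Matrix (Fin m) (Fin m) ℂ) (x y : Fin m → ℂ) :
    star x ⬝ᵥ (M *ᵥ y) =
      inner ℂ ((WithLp.equiv 2 _).symm x)
        (Matrix.toEuclideanCLM (𝕜 := ℂ) M ((WithLp.equiv 2 _).symm y)) := by
  simp only [WithLp.equiv_symm_apply, Matrix.toEuclideanCLM_toLp, EuclideanSpace.inner_toLp_toLp]
  exact dotProduct_comm _ _

lemma norm_symm_sq (x : Fin m → ℂ) :
    ‖(WithLp.equiv 2 (Fin m → ℂ)).symm x‖ ^ 2 = (star x ⬝ᵥ x).re := by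
  have := inner_self_eq_norm_sq (𝕜 := ℂ) ((WithLp.equiv 2 (Fin m → ℂ)).symm x)
  simp only [WithLp.equiv_symm_apply, EuclideanSpace.inner_toLp_toLp] at this
  rw [dotProduct_comm] at this
  exact this.symm

lemma quad_abs_le (M : Matrix (Fin m) (Fin m) ℂ) (x : Fin m → ℂ) :
    ‖star x ⬝ᵥ (M *ᵥ x)‖ ≤ euclideanOpNorm M * (star x ⬝ᵥ x).re := by
  set x' := (WithLp.equiv 2 (Fin m → ℂ)).symm x
  rw [dot_toCLM]
  calc ‖inner ℂ x' (Matrix.toEuclideanCLM (𝕜 := ℂ) M x')‖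
      ≤ ‖x'‖ * ‖Matrix.toEuclideanCLM (𝕜 := ℂ) M x'‖ := norm_inner_le_norm _ _
    _ ≤ ‖x'‖ * (‖Matrix.toEuclideanCLM (𝕜 := ℂ) M‖ * ‖x'‖) := by
        gcongr; exact (Matrix.toEuclideanCLM (𝕜 := ℂ) M).le_opNorm x'
    _ = euclideanOpNorm M * ‖x'‖ ^ 2 := by rw [euclideanOpNorm]; ring
    _ = euclideanOpNorm M * (star x ⬝ᵥ x).re := by rw [norm_symm_sq]

lemma dot_cs (x y : Fin m → ℂ) :
    ‖star x ⬝ᵥ y‖ ^ 2 ≤ (star x ⬝ᵥ x).re * (star y ⬝ᵥ y).re := by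
  have h : star x ⬝ᵥ y =
      inner ℂ ((WithLp.equiv 2 (Fin m → ℂ)).symm x) ((WithLp.equiv 2 (Fin m → ℂ)).symm y) := by
    simp only [WithLp.equiv_symm_apply, EuclideanSpace.inner_toLp_toLp]
    exact dotProduct_comm _ _
  rw [h, ← norm_symm_sq, ← norm_symm_sq]
  calc ‖inner ℂ ((WithLp.equiv 2 (Fin m → ℂ)).symm x) ((WithLp.equiv 2 (Fin m → ℂ)).symm y)‖ ^ 2
      ≤ (‖(WithLp.equiv 2 (Fin m → ℂ)).symm x‖ * ‖(WithLp.equiv 2 (Fin m → ℂ)).symm y‖) ^ 2 := by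
        gcongr <;> first | positivity | exact norm_inner_le_norm _ _
    _ = _ := by ring

lemma opNorm_mul_le (A B : Matrix (Fin m) (Fin m) ℂ) :
    euclideanOpNorm (A * B) ≤ euclideanOpNorm A * euclideanOpNorm B := by
  rw [euclideanOpNorm, euclideanOpNorm, euclideanOpNorm, _root_.map_mul]
  exact norm_mul_le _ _

lemma opNorm_nonneg (A : Matrix (Fin m) (Fin m) ℂ) : 0 ≤ euclideanOpNorm A := norm_nonneg _



open scoped MatrixOrder in
lemma exists_herm_sqrt {B : Matrix (Fin m) (Fin m) ℂ} (hB : B.PosSemidef) :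
    ∃ S : Matrix (Fin m) (Fin m) ℂ, Sᴴ = S ∧ S * S = B :=
  ⟨CFC.sqrt B, (CFC.sqrt_nonneg B).posSemidef.isHermitian,
    CFC.sqrt_mul_sqrt_self B (Matrix.nonneg_iff_posSemidef.mpr hB)⟩

/-- pull a matrix across the dot product -/
lemma dot_conj (A M : Matrix (Fin m) (Fin m) ℂ) (x y : Fin m → ℂ) :
    star (A *ᵥ x) ⬝ᵥ (M *ᵥ y) = star x ⬝ᵥ ((Aᴴ * M) *ᵥ y) := by
  rw [star_mulVec, dotProduct_mulVec, Matrix.vecMul_vecMul, ← dotProduct_mulVec]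

lemma psd_cs {Γ : Matrix (Fin m) (Fin m) ℂ} (hΓ : Γ.PosSemidef) (x y : Fin m → ℂ) :
    ‖star x ⬝ᵥ (Γ *ᵥ y)‖ ^ 2 ≤
      (star x ⬝ᵥ (Γ *ᵥ x)).re * (star y ⬝ᵥ (Γ *ᵥ y)).re := by
  obtain ⟨S, hSh, hSS⟩ := exists_herm_sqrt hΓ
  have key : ∀ u v : Fin m → ℂ, star u ⬝ᵥ (Γ *ᵥ v) = star (S *ᵥ u) ⬝ᵥ (S *ᵥ v) := by
    intro u v
    rw [dot_conj, hSh, hSS]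
  rw [key x y, key x x, key y y]
  exact dot_cs _ _

lemma trace_abs_le {B : Matrix (Fin m) (Fin m) ℂ} (A : Matrix (Fin m) (Fin m) ℂ)
    (hB : B.PosSemidef) :
    ‖(A * B).trace‖ ≤ euclideanOpNorm A * B.trace.re := by
  obtain ⟨S, hSh, hSS⟩ := exists_herm_sqrt hB
  have hconj : ∀ p q, star (S p q) = S q p := by
    intro p q
    conv_lhs => rw [← Matrix.conjTranspose_apply, hSh]
  set c : Fin m → Fin m → ℂ := fun i j => S j i with hc
  have htr : (A * B).trace = ∑ i, star (c i) ⬝ᵥ (A *ᵥ c i) := by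
    rw [← hSS, ← Matrix.mul_assoc, Matrix.trace_mul_comm, Matrix.trace]
    congr 1
    funext i
    simp only [Matrix.diag_apply, Matrix.mul_apply, dotProduct, Matrix.mulVec,
      Pi.star_apply, hc, Finset.sum_mul, Finset.mul_sum]
    refine Finset.sum_congr rfl fun j _ => Finset.sum_congr rfl fun k _ => ?_
    rw [hconj]
  have htr2 : B.trace.re = ∑ i, (star (c i) ⬝ᵥ c i).re := by
    rw [← hSS, Matrix.trace, Complex.re_sum]
    refine Finset.sum_congr rfl fun i _ => ?_
    congr 1
    simp only [Matrix.diag_apply, Matrix.mul_apply, dotProduct, Pi.star_apply, hc]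
    refine Finset.sum_congr rfl fun j _ => ?_
    rw [hconj]
  rw [htr, htr2]
  calc ‖∑ i, star (c i) ⬝ᵥ (A *ᵥ c i)‖
      ≤ ∑ i, ‖star (c i) ⬝ᵥ (A *ᵥ c i)‖ := norm_sum_le _ _
    _ ≤ ∑ i, euclideanOpNorm A * (star (c i) ⬝ᵥ c i).re := by
        exact Finset.sum_le_sum fun i _ => quad_abs_le A (c i)
    _ = euclideanOpNorm A * ∑ i, (star (c i) ⬝ᵥ c i).re := by rw [Finset.mul_sum]

lemma psd_trace_re_nonneg {B : Matrix (Fin m) (Fin m) ℂ} (hB : B.PosSemidef) :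
    0 ≤ B.trace.re := by
  rw [Matrix.trace, Complex.re_sum]
  refine Finset.sum_nonneg fun i _ => ?_
  have := hB.re_dotProduct_nonneg (Pi.single i 1)
  simpa [dotProduct, Matrix.mulVec, Pi.single_apply, Finset.sum_ite_eq'] using this

lemma herm_trace_real {B : Matrix (Fin m) (Fin m) ℂ} (hB : Bᴴ = B) :
    B.trace = (B.trace.re : ℂ) := by
  have : star B.trace = B.trace := by
    rw [← Matrix.trace_conjTranspose, hB]
  have him : B.trace.im = 0 := by
    have := congrArg Complex.im this
    simp only [Complex.star_def, Complex.conj_im] at this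
    linarith
  apply Complex.ext
  · simp
  · simp [him]

lemma psd_trace_zero {B : Matrix (Fin m) (Fin m) ℂ} (hB : B.PosSemidef)
    (h : B.trace = 0) : B = 0 := by
  obtain ⟨S, hSh, hSS⟩ := exists_herm_sqrt hB
  have htr : (Sᴴ * S).trace = 0 := by rw [hSh, hSS, h]
  have h0 : ∑ j, ((Sᴴ * S) j j).re = 0 := by
    have := congrArg Complex.re htr
    simpa [Matrix.trace, Complex.re_sum, Matrix.diag_apply] using this
  have hsum : ∑ j, ∑ i, Complex.normSq (S i j) = 0 := by
    rw [← h0]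
    refine Finset.sum_congr rfl fun j _ => ?_
    simp only [Matrix.mul_apply, Matrix.conjTranspose_apply, Complex.re_sum]
    refine Finset.sum_congr rfl fun i _ => ?_
    rw [show star (S i j) * S i j = ((Complex.normSq (S i j) : ℝ) : ℂ) by
      rw [Complex.normSq_eq_conj_mul_self]; rfl]
    simp
  have hS0 : S = 0 := by
    ext i j
    have h1 : ∀ j ∈ Finset.univ, (0:ℝ) ≤ ∑ i, Complex.normSq (S i j) :=
      fun j _ => Finset.sum_nonneg fun i _ => Complex.normSq_nonneg _
    have h2 := (Finset.sum_eq_zero_iff_of_nonneg h1).mp hsum j (Finset.mem_univ j)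
    have h3 : ∀ i ∈ Finset.univ, (0:ℝ) ≤ Complex.normSq (S i j) :=
      fun i _ => Complex.normSq_nonneg _
    have h4 := (Finset.sum_eq_zero_iff_of_nonneg h3).mp h2 i (Finset.mem_univ i)
    simpa using Complex.normSq_eq_zero.mp h4
  rw [← hSS, hS0, Matrix.zero_mul]



lemma proj_norm_le_one {γ : Matrix (Fin m) (Fin m) ℂ} (hh : γᴴ = γ) (hi : γ * γ = γ) :
    euclideanOpNorm γ ≤ 1 := by
  rw [euclideanOpNorm]
  refine ContinuousLinearMap.opNorm_le_bound _ zero_le_one fun y => ?_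
  set T := Matrix.toEuclideanCLM (𝕜 := ℂ) γ with hT
  have hadj : ContinuousLinearMap.adjoint T ∘L T = T := by
    rw [← ContinuousLinearMap.star_eq_adjoint]
    have : star T = Matrix.toEuclideanCLM (𝕜 := ℂ) γᴴ := by
      rw [hT, ← map_star]; rfl
    rw [this, hh]
    ext z
    simp only [ContinuousLinearMap.comp_apply, hT]
    rw [← ContinuousLinearMap.mul_apply, ← _root_.map_mul, hi]
  have key : ‖T y‖ ^ 2 ≤ ‖y‖ * ‖T y‖ := by
    have h1 : (‖T y‖ : ℝ) ^ 2 = RCLike.re (inner ℂ (T y) (T y)) := by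
      rw [inner_self_eq_norm_sq]
    have h2 : inner ℂ (T y) (T y) = inner ℂ y (T y) := by
      rw [← ContinuousLinearMap.adjoint_inner_right T y (T y)]
      rw [show ContinuousLinearMap.adjoint T (T y) = (ContinuousLinearMap.adjoint T ∘L T) y from rfl,
        hadj]
    rw [h1, h2]
    calc RCLike.re (inner ℂ y (T y)) ≤ ‖(inner ℂ y (T y) : ℂ)‖ :=
          RCLike.re_le_norm _
      _ ≤ ‖y‖ * ‖T y‖ := norm_inner_le_norm _ _
  nlinarith [norm_nonneg (T y), norm_nonneg y]

lemma trace_vecMulVec_mul (ψ : Fin m → ℂ) (M : Matrix (Fin m) (Fin m) ℂ) :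
    (Matrix.vecMulVec ψ (star ψ) * M).trace = star ψ ⬝ᵥ (M *ᵥ ψ) := by
  simp only [Matrix.trace, Matrix.diag_apply, Matrix.mul_apply, Matrix.vecMulVec_apply,
    dotProduct, Matrix.mulVec, Pi.star_apply]
  rw [Finset.sum_comm]
  refine Finset.sum_congr rfl fun j _ => ?_
  rw [Finset.mul_sum]
  refine Finset.sum_congr rfl fun i _ => ?_
  ring

lemma vecMulVec_conj (ψ M) : (Matrix.vecMulVec ψ (star ψ) * M *
    Matrix.vecMulVec ψ (star ψ) : Matrix (Fin m) (Fin m) ℂ) =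
    (star ψ ⬝ᵥ (M *ᵥ ψ)) • Matrix.vecMulVec ψ (star ψ) := by
  ext i j
  simp only [Matrix.mul_apply, Matrix.vecMulVec_apply, Matrix.smul_apply, dotProduct,
    Matrix.mulVec, Pi.star_apply, smul_eq_mul, Finset.sum_mul, Finset.mul_sum]
  rw [Finset.sum_comm]
  refine Finset.sum_congr rfl fun q _ => ?_
  refine Finset.sum_congr rfl fun p _ => ?_
  ring

lemma rank_one_of_proj {γ : Matrix (Fin m) (Fin m) ℂ} (hh : γᴴ = γ) (hi : γ * γ = γ)
    (ht : γ.trace = 1) :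
    ∃ ψ : Fin m → ℂ, star ψ ⬝ᵥ ψ = 1 ∧ γ = Matrix.vecMulVec ψ (star ψ) := by
  -- find a nonzero diagonal entry
  have hγ0 : ∃ i, γ i i ≠ 0 := by
    by_contra h
    push_neg at h
    have : γ.trace = 0 := by
      rw [Matrix.trace]
      exact Finset.sum_eq_zero fun i _ => h i
    rw [ht] at this; exact one_ne_zero this
  obtain ⟨i, hi0⟩ := hγ0
  set x : Fin m → ℂ := fun j => γ j i with hx
  have hconj : ∀ p q, star (γ p q) = γ q p := by
    intro p q
    conv_lhs => rw [← Matrix.conjTranspose_apply, hh]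
  have hγx : γ *ᵥ x = x := by
    funext j
    have := congrFun (congrFun hi j) i
    simpa [Matrix.mul_apply, Matrix.mulVec, dotProduct, hx] using this
  have hdx : star x ⬝ᵥ x = γ i i := by
    have := congrFun (congrFun hi i) i
    rw [Matrix.mul_apply] at this
    simp only [dotProduct, Pi.star_apply, hx]
    rw [← this]
    refine Finset.sum_congr rfl fun j _ => ?_
    rw [hconj]
  -- the diagonal entry is a positive real
  have hdre : star x ⬝ᵥ x = ((∑ j, Complex.normSq (x j) : ℝ) : ℂ) := by
    simp only [dotProduct, Pi.star_apply]
    push_cast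
    refine Finset.sum_congr rfl fun j _ => ?_
    rw [Complex.normSq_eq_conj_mul_self]; rfl
  set d : ℝ := ∑ j, Complex.normSq (x j) with hd
  have hdpos : 0 < d := by
    rcases (Finset.sum_nonneg fun j (_ : j ∈ Finset.univ) =>
      Complex.normSq_nonneg (x j)).lt_or_eq with h | h
    · exact h
    · exfalso
      apply hi0
      rw [← hdx, hdre]
      norm_cast
      rw [hd, ← h]
  set c : ℝ := Real.sqrt d with hc
  have hcpos : 0 < c := Real.sqrt_pos.mpr hdpos
  have hc2 : (c : ℝ) * c = d := Real.mul_self_sqrt hdpos.le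
  set ψ : Fin m → ℂ := fun j => ((c : ℂ))⁻¹ * x j with hψ
  have hcne : (c : ℂ) ≠ 0 := by
    simp only [ne_eq, Complex.ofReal_eq_zero]
    exact hcpos.ne'
  have hψ1 : star ψ ⬝ᵥ ψ = 1 := by
    simp only [dotProduct, Pi.star_apply, hψ, star_mul']
    have : ∀ j, star ((c:ℂ))⁻¹ * star (x j) * ((c:ℂ)⁻¹ * x j)
        = (c:ℂ)⁻¹ * (c:ℂ)⁻¹ * (star (x j) * x j) := by
      intro j
      rw [star_inv₀]
      rw [show star ((c : ℂ)) = (c : ℂ) from by rw [Complex.star_def, Complex.conj_ofReal]]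
      ring
    rw [Finset.sum_congr rfl fun j _ => this j, ← Finset.mul_sum]
    have hsum : ∑ j, star (x j) * x j = (d : ℂ) := by
      have := hdre
      simpa [dotProduct, Pi.star_apply, hd] using this
    rw [hsum, show ((d:ℝ):ℂ) = (c:ℂ) * (c:ℂ) by exact_mod_cast hc2.symm]
    field_simp
  -- γ ψ = ψ
  have hγψ : γ *ᵥ ψ = ψ := by
    funext j
    simp only [hψ, Matrix.mulVec, dotProduct, Finset.mul_sum]
    have : ∀ k, γ j k * ((c:ℂ)⁻¹ * x k) = (c:ℂ)⁻¹ * (γ j k * x k) := fun k => by ring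
    rw [Finset.sum_congr rfl fun k _ => this k, ← Finset.mul_sum]
    congr 1
    exact congrFun hγx j
  set P := Matrix.vecMulVec ψ (star ψ) with hP
  have hPh : Pᴴ = P := by
    ext p q
    simp only [Matrix.conjTranspose_apply, Matrix.vecMulVec_apply, hP, Pi.star_apply, star_mul',
      star_star]
    ring
  have hγP : γ * P = P := by
    ext p q
    simp only [Matrix.mul_apply, Matrix.vecMulVec_apply, hP, Pi.star_apply]
    calc ∑ k, γ p k * (ψ k * star (ψ q)) = (∑ k, γ p k * ψ k) * star (ψ q) := by
          rw [Finset.sum_mul]; exact Finset.sum_congr rfl fun k _ => by ring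
      _ = ψ p * star (ψ q) := by rw [show ∑ k, γ p k * ψ k = ψ p from congrFun hγψ p]
  have hPγ : P * γ = P := by
    have := congrArg Matrix.conjTranspose hγP
    rwa [Matrix.conjTranspose_mul, hPh, hh] at this
  have hψ1' : (∑ k, star (ψ k) * ψ k) = 1 := by
    simpa [dotProduct] using hψ1
  have hPP : P * P = P := by
    ext p q
    simp only [Matrix.mul_apply, Matrix.vecMulVec_apply, hP, Pi.star_apply]
    calc ∑ k, ψ p * star (ψ k) * (ψ k * star (ψ q))
        = (∑ k, star (ψ k) * ψ k) * (ψ p * star (ψ q)) := by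
          rw [Finset.sum_mul]; exact Finset.sum_congr rfl fun k _ => by ring
      _ = ψ p * star (ψ q) := by rw [hψ1']; ring
  have hPtr : P.trace = 1 := by
    have h1 : (P * 1).trace = star ψ ⬝ᵥ ((1 : Matrix (Fin m) (Fin m) ℂ) *ᵥ ψ) :=
      trace_vecMulVec_mul ψ 1
    simpa [hψ1] using h1
  set D := γ - P with hD
  have hDh : Dᴴ = D := by rw [hD, Matrix.conjTranspose_sub, hh, hPh]
  have hDD : D * D = D := by
    rw [hD, sub_mul, mul_sub, mul_sub, hi, hγP, hPγ, hPP]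
    abel
  have hDpsd : D.PosSemidef := by
    have := Matrix.posSemidef_conjTranspose_mul_self D
    rwa [hDh, hDD] at this
  have hDtr : D.trace = 0 := by
    rw [hD, Matrix.trace_sub, ht, hPtr, sub_self]
  have hD0 : D = 0 := psd_trace_zero hDpsd hDtr
  exact ⟨ψ, hψ1, by rw [← hP, ← sub_eq_zero]; exact hD0⟩

lemma P_mulVec (ψ z : Fin m → ℂ) :
    Matrix.vecMulVec ψ (star ψ) *ᵥ z = (star ψ ⬝ᵥ z) • ψ := by
  funext j
  simp only [Matrix.mulVec, dotProduct, Matrix.vecMulVec_apply, Pi.smul_apply,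
    smul_eq_mul, Pi.star_apply, Finset.sum_mul, Finset.mul_sum]
  exact Finset.sum_congr rfl fun k _ => by ring

lemma dot_conj' (A : Matrix (Fin m) (Fin m) ℂ) (x y : Fin m → ℂ) :
    star (A *ᵥ x) ⬝ᵥ y = star x ⬝ᵥ (Aᴴ *ᵥ y) := by
  rw [star_mulVec, ← dotProduct_mulVec]

lemma star_dot (x y : Fin m → ℂ) :
    star (star x ⬝ᵥ y) = star y ⬝ᵥ x := by
  rw [Matrix.star_dotProduct, star_star]

lemma real_of_star_eq {z : ℂ} (h : star z = z) : z = ((z.re : ℝ) : ℂ) := by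
  have him : z.im = 0 := by
    have := congrArg Complex.im h
    simp only [Complex.star_def, Complex.conj_im] at this
    linarith
  apply Complex.ext
  · simp
  · simp [him]

end Aux

set_option maxHeartbeats 1000000

theorem trace_estimate_hermitian {n : ℕ} (L γ Γ : Matrix (Fin (n + 1)) (Fin (n + 1)) ℂ)
    (hL : Lᴴ = L)
    (hγherm : γᴴ = γ) (hγidem : γ * γ = γ) (hγtr : γ.trace = 1)
    (hΓ : Γ.PosSemidef) (hΓtr : Γ.trace = 1) :
    ‖(-4 * (L * γ * L * Γ).trace
        + 2 * (Γ * (L * γ + γ * L)).trace * ((Γ * L).trace + (γ * L).trace)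
        - 4 * (Γ * γ).trace * (Γ * L).trace * (γ * L).trace)‖
      ≤ 20 * euclideanOpNorm L ^ 2 * ((1 - γ) * Γ).trace.re := by
  classical
  obtain ⟨ψ, hψ1, hγψ⟩ := Aux.rank_one_of_proj hγherm hγidem hγtr
  subst hγψ
  set N := euclideanOpNorm L with hN
  have hNnn : 0 ≤ N := Aux.opNorm_nonneg L
  have hΓh : Γᴴ = Γ := hΓ.isHermitian
  have hQh : (1 - Matrix.vecMulVec ψ (star ψ))ᴴ = 1 - Matrix.vecMulVec ψ (star ψ) := by
    rw [Matrix.conjTranspose_sub, Matrix.conjTranspose_one, hγherm]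
  have hBpsd : ((1 - Matrix.vecMulVec ψ (star ψ)) * Γ *
      (1 - Matrix.vecMulVec ψ (star ψ))).PosSemidef := by
    have := hΓ.conjTranspose_mul_mul_same (B := (1 - Matrix.vecMulVec ψ (star ψ)))
    rwa [hQh] at this
  have hPpsd : (Matrix.vecMulVec ψ (star ψ)).PosSemidef := by
    have := Matrix.posSemidef_conjTranspose_mul_self (Matrix.vecMulVec ψ (star ψ))
    rwa [hγherm, hγidem] at this
  -- the vector w and derived scalars
  set w := ((1 - Matrix.vecMulVec ψ (star ψ)) * L) *ᵥ ψ with hw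
  set X := star w ⬝ᵥ (Γ *ᵥ w) with hXdef
  set r := star ψ ⬝ᵥ (Γ *ᵥ w) with hrdef
  set sc := (L * ((1 - Matrix.vecMulVec ψ (star ψ)) * Γ *
      (1 - Matrix.vecMulVec ψ (star ψ)))).trace with hscdef
  -- conversions of traces to dot products
  have hS1 : (L * Matrix.vecMulVec ψ (star ψ) * L * Γ).trace
      = star ψ ⬝ᵥ (L *ᵥ (Γ *ᵥ (L *ᵥ ψ))) := by
    rw [show L * Matrix.vecMulVec ψ (star ψ) * L * Γ
        = (L * Matrix.vecMulVec ψ (star ψ)) * (L * Γ) from by simp only [Matrix.mul_assoc],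
      Matrix.trace_mul_comm,
      show (L * Γ) * (L * Matrix.vecMulVec ψ (star ψ))
        = ((L * Γ * L) * Matrix.vecMulVec ψ (star ψ)) from by simp only [Matrix.mul_assoc],
      Matrix.trace_mul_comm, Aux.trace_vecMulVec_mul]
    simp only [← Matrix.mulVec_mulVec]
  have hS2 : (Γ * (L * Matrix.vecMulVec ψ (star ψ) + Matrix.vecMulVec ψ (star ψ) * L)).trace
      = star ψ ⬝ᵥ (Γ *ᵥ (L *ᵥ ψ)) + star ψ ⬝ᵥ (L *ᵥ (Γ *ᵥ ψ)) := by
    rw [mul_add, Matrix.trace_add]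
    congr 1
    · rw [show Γ * (L * Matrix.vecMulVec ψ (star ψ)) = (Γ * L) * Matrix.vecMulVec ψ (star ψ)
        from by simp only [Matrix.mul_assoc],
        Matrix.trace_mul_comm, Aux.trace_vecMulVec_mul]
      simp only [← Matrix.mulVec_mulVec]
    · rw [show Γ * (Matrix.vecMulVec ψ (star ψ) * L) = (Γ * Matrix.vecMulVec ψ (star ψ)) * L
        from by simp only [Matrix.mul_assoc],
        Matrix.trace_mul_comm,
        show L * (Γ * Matrix.vecMulVec ψ (star ψ)) = (L * Γ) * Matrix.vecMulVec ψ (star ψ)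
        from by simp only [Matrix.mul_assoc],
        Matrix.trace_mul_comm, Aux.trace_vecMulVec_mul]
      simp only [← Matrix.mulVec_mulVec]
  have hS3 : (Γ * Matrix.vecMulVec ψ (star ψ)).trace = star ψ ⬝ᵥ (Γ *ᵥ ψ) := by
    rw [Matrix.trace_mul_comm, Aux.trace_vecMulVec_mul]
  have hS4 : (Matrix.vecMulVec ψ (star ψ) * L).trace = star ψ ⬝ᵥ (L *ᵥ ψ) :=
    Aux.trace_vecMulVec_mul ψ L
  have hS5 : ((1 - Matrix.vecMulVec ψ (star ψ)) * Γ).trace = 1 - star ψ ⬝ᵥ (Γ *ᵥ ψ) := by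
    rw [sub_mul, one_mul, Matrix.trace_sub, hΓtr, Aux.trace_vecMulVec_mul]
  -- dot product polynomial forms
  have hXv : X = star ψ ⬝ᵥ (L *ᵥ (Γ *ᵥ (L *ᵥ ψ)))
      - (star ψ ⬝ᵥ (L *ᵥ ψ)) * (star ψ ⬝ᵥ (L *ᵥ (Γ *ᵥ ψ)))
      - (star ψ ⬝ᵥ (Γ *ᵥ (L *ᵥ ψ))) * (star ψ ⬝ᵥ (L *ᵥ ψ))
      + (star ψ ⬝ᵥ (L *ᵥ ψ)) * (star ψ ⬝ᵥ (Γ *ᵥ ψ)) * (star ψ ⬝ᵥ (L *ᵥ ψ)) := by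
    rw [hXdef, hw, Aux.dot_conj, Matrix.conjTranspose_mul, hL, hQh]
    simp only [← Matrix.mulVec_mulVec, Matrix.sub_mulVec, Matrix.one_mulVec, Aux.P_mulVec,
      Matrix.mulVec_smul, dotProduct_smul, dotProduct_sub, smul_eq_mul, Matrix.mulVec_sub]
    ring
  have hrv : r = star ψ ⬝ᵥ (Γ *ᵥ (L *ᵥ ψ))
      - (star ψ ⬝ᵥ (Γ *ᵥ ψ)) * (star ψ ⬝ᵥ (L *ᵥ ψ)) := by
    rw [hrdef, hw]
    simp only [← Matrix.mulVec_mulVec, Matrix.sub_mulVec, Matrix.one_mulVec, Aux.P_mulVec,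
      Matrix.mulVec_smul, dotProduct_smul, dotProduct_sub, smul_eq_mul, Matrix.mulVec_sub]
    ring
  have hrsv : star r = star ψ ⬝ᵥ (L *ᵥ (Γ *ᵥ ψ))
      - (star ψ ⬝ᵥ (Γ *ᵥ ψ)) * (star ψ ⬝ᵥ (L *ᵥ ψ)) := by
    rw [hrdef, Aux.star_dot, Aux.dot_conj', hΓh, hw, Aux.dot_conj, Matrix.conjTranspose_mul,
      hL, hQh]
    simp only [← Matrix.mulVec_mulVec, Matrix.sub_mulVec, Matrix.one_mulVec, Aux.P_mulVec,
      Matrix.mulVec_smul, dotProduct_smul, dotProduct_sub, smul_eq_mul, Matrix.mulVec_sub]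
    try ring
  have e2 : ((Γ * Matrix.vecMulVec ψ (star ψ)) * L).trace
      = star ψ ⬝ᵥ (L *ᵥ (Γ *ᵥ ψ)) := by
    rw [Matrix.trace_mul_cycle, Matrix.trace_mul_comm, Aux.trace_vecMulVec_mul]
    simp only [← Matrix.mulVec_mulVec]
  have e3 : (Matrix.vecMulVec ψ (star ψ) * ((Γ * Matrix.vecMulVec ψ (star ψ)) * L)).trace
      = (star ψ ⬝ᵥ (Γ *ᵥ ψ)) * (star ψ ⬝ᵥ (L *ᵥ ψ)) := by
    rw [Aux.trace_vecMulVec_mul]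
    simp only [← Matrix.mulVec_mulVec, Aux.P_mulVec, Matrix.mulVec_smul,
      dotProduct_smul, smul_eq_mul]
    try ring
  have e4 : (Matrix.vecMulVec ψ (star ψ) * (Γ * L)).trace
      = star ψ ⬝ᵥ (Γ *ᵥ (L *ᵥ ψ)) := by
    rw [Aux.trace_vecMulVec_mul]
    simp only [← Matrix.mulVec_mulVec]
  have hscv : sc = (Γ * L).trace - star ψ ⬝ᵥ (Γ *ᵥ (L *ᵥ ψ)) - star ψ ⬝ᵥ (L *ᵥ (Γ *ᵥ ψ))
      + (star ψ ⬝ᵥ (Γ *ᵥ ψ)) * (star ψ ⬝ᵥ (L *ᵥ ψ)) := by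
    have e1 : (1 - Matrix.vecMulVec ψ (star ψ)) * Γ * (1 - Matrix.vecMulVec ψ (star ψ)) * L
        = Γ * L - Matrix.vecMulVec ψ (star ψ) * (Γ * L)
          - (Γ * Matrix.vecMulVec ψ (star ψ)) * L
          + Matrix.vecMulVec ψ (star ψ) * ((Γ * Matrix.vecMulVec ψ (star ψ)) * L) := by
      noncomm_ring
    have e0 : sc = ((1 - Matrix.vecMulVec ψ (star ψ)) * Γ *
        (1 - Matrix.vecMulVec ψ (star ψ)) * L).trace := by
      rw [hscdef, Matrix.trace_mul_comm]
    rw [e0, e1, Matrix.trace_add, Matrix.trace_sub, Matrix.trace_sub, e2, e3, e4,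
      Matrix.trace_mul_comm]
  -- trace form of X, for the operator-norm bound
  have hXtr : ((L * Matrix.vecMulVec ψ (star ψ) * L) *
      ((1 - Matrix.vecMulVec ψ (star ψ)) * Γ * (1 - Matrix.vecMulVec ψ (star ψ)))).trace = X := by
    rw [show (L * Matrix.vecMulVec ψ (star ψ) * L) *
        ((1 - Matrix.vecMulVec ψ (star ψ)) * Γ * (1 - Matrix.vecMulVec ψ (star ψ)))
        = (L * Matrix.vecMulVec ψ (star ψ)) *
          (L * ((1 - Matrix.vecMulVec ψ (star ψ)) * Γ * (1 - Matrix.vecMulVec ψ (star ψ))))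
        from by simp only [Matrix.mul_assoc],
      Matrix.trace_mul_comm,
      show (L * ((1 - Matrix.vecMulVec ψ (star ψ)) * Γ * (1 - Matrix.vecMulVec ψ (star ψ)))) *
          (L * Matrix.vecMulVec ψ (star ψ))
        = ((L * ((1 - Matrix.vecMulVec ψ (star ψ)) * Γ * (1 - Matrix.vecMulVec ψ (star ψ))) * L) *
          Matrix.vecMulVec ψ (star ψ))
        from by simp only [Matrix.mul_assoc],
      Matrix.trace_mul_comm, Aux.trace_vecMulVec_mul]
    simp only [← Matrix.mulVec_mulVec, Matrix.sub_mulVec, Matrix.one_mulVec, Aux.P_mulVec,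
      Matrix.mulVec_smul, dotProduct_smul, dotProduct_sub, smul_eq_mul, Matrix.mulVec_sub]
    rw [hXv]
    ring
  -- reality and positivity facts
  have hd2real : star ψ ⬝ᵥ (Γ *ᵥ ψ) = (((star ψ ⬝ᵥ (Γ *ᵥ ψ)).re : ℝ) : ℂ) := by
    refine Aux.real_of_star_eq ?_
    rw [Aux.star_dot, Aux.dot_conj', hΓh]
  have hXreal : X = ((X.re : ℝ) : ℂ) := by
    refine Aux.real_of_star_eq ?_
    rw [hXdef, Aux.star_dot, Aux.dot_conj', hΓh]
  have hd2nn : 0 ≤ (star ψ ⬝ᵥ (Γ *ᵥ ψ)).re := hΓ.re_dotProduct_nonneg ψ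
  have hXre_nn : 0 ≤ X.re := hΓ.re_dotProduct_nonneg w
  have hεc : ((1 - Matrix.vecMulVec ψ (star ψ)) * Γ *
      (1 - Matrix.vecMulVec ψ (star ψ))).trace = ((1 - Matrix.vecMulVec ψ (star ψ)) * Γ).trace := by
    rw [Matrix.trace_mul_comm,
      show (1 - Matrix.vecMulVec ψ (star ψ)) * ((1 - Matrix.vecMulVec ψ (star ψ)) * Γ)
        = ((1 - Matrix.vecMulVec ψ (star ψ)) * (1 - Matrix.vecMulVec ψ (star ψ))) * Γ
        from by simp only [Matrix.mul_assoc],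
      show (1 - Matrix.vecMulVec ψ (star ψ)) * (1 - Matrix.vecMulVec ψ (star ψ))
        = 1 - Matrix.vecMulVec ψ (star ψ) from by
          have h1 : (1 - Matrix.vecMulVec ψ (star ψ)) * (1 - Matrix.vecMulVec ψ (star ψ))
            = 1 - Matrix.vecMulVec ψ (star ψ) - Matrix.vecMulVec ψ (star ψ)
              + Matrix.vecMulVec ψ (star ψ) * Matrix.vecMulVec ψ (star ψ) := by noncomm_ring
          rw [h1, hγidem]; abel]
  set ε := ((1 - Matrix.vecMulVec ψ (star ψ)) * Γ).trace.re with hεdef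
  have hεre : ε = 1 - (star ψ ⬝ᵥ (Γ *ᵥ ψ)).re := by
    rw [hεdef, hS5]
    simp
  have hεnn : 0 ≤ ε := by
    have h := Aux.psd_trace_re_nonneg hBpsd
    rw [hεdef]
    rw [congrArg Complex.re hεc] at h
    exact h
  have hεle1 : ε ≤ 1 := by rw [hεre]; linarith
  -- bounds
  have hnormP : euclideanOpNorm (Matrix.vecMulVec ψ (star ψ)) ≤ 1 :=
    Aux.proj_norm_le_one hγherm hγidem
  have hnormLPL : euclideanOpNorm (L * Matrix.vecMulVec ψ (star ψ) * L) ≤ N * N := by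
    have h1 := Aux.opNorm_mul_le (L * Matrix.vecMulVec ψ (star ψ)) L
    have h2 := Aux.opNorm_mul_le L (Matrix.vecMulVec ψ (star ψ))
    have h5 := Aux.opNorm_nonneg L
    rw [hN]
    nlinarith [mul_le_mul_of_nonneg_right h2 h5,
      mul_le_mul_of_nonneg_right (mul_le_mul_of_nonneg_left hnormP h5) h5]
  have hXbound : X.re ≤ N * N * ε := by
    calc X.re ≤ ‖X‖ := Complex.re_le_norm X
      _ = ‖((L * Matrix.vecMulVec ψ (star ψ) * L) *
          ((1 - Matrix.vecMulVec ψ (star ψ)) * Γ * (1 - Matrix.vecMulVec ψ (star ψ)))).trace‖ := by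
          rw [hXtr]
      _ ≤ euclideanOpNorm (L * Matrix.vecMulVec ψ (star ψ) * L) *
          ((1 - Matrix.vecMulVec ψ (star ψ)) * Γ * (1 - Matrix.vecMulVec ψ (star ψ))).trace.re :=
          Aux.trace_abs_le _ hBpsd
      _ = euclideanOpNorm (L * Matrix.vecMulVec ψ (star ψ) * L) * ε := by
          rw [hεdef, congrArg Complex.re hεc]
      _ ≤ N * N * ε := by gcongr
  have hrbound : (‖r‖) ^ 2 ≤ (star ψ ⬝ᵥ (Γ *ᵥ ψ)).re * X.re := Aux.psd_cs hΓ ψ w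
  have hsbound : ‖sc‖ ≤ N * ε := by
    calc ‖sc‖
        ≤ euclideanOpNorm L *
          ((1 - Matrix.vecMulVec ψ (star ψ)) * Γ * (1 - Matrix.vecMulVec ψ (star ψ))).trace.re :=
          Aux.trace_abs_le _ hBpsd
      _ = N * ε := by rw [hεdef, congrArg Complex.re hεc]
  have hlbound : ‖star ψ ⬝ᵥ (L *ᵥ ψ)‖ ≤ N := by
    have h1 := Aux.trace_abs_le (B := Matrix.vecMulVec ψ (star ψ)) L hPpsd
    rw [Matrix.trace_mul_comm, hS4] at h1
    rw [show (Matrix.vecMulVec ψ (star ψ)).trace.re = 1 from by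
      rw [congrArg Complex.re hγtr]; simp] at h1
    simpa using h1
  -- the key algebraic identity
  have key : -4 * (L * Matrix.vecMulVec ψ (star ψ) * L * Γ).trace
        + 2 * (Γ * (L * Matrix.vecMulVec ψ (star ψ) + Matrix.vecMulVec ψ (star ψ) * L)).trace *
          ((Γ * L).trace + (Matrix.vecMulVec ψ (star ψ) * L).trace)
        - 4 * (Γ * Matrix.vecMulVec ψ (star ψ)).trace * (Γ * L).trace *
          (Matrix.vecMulVec ψ (star ψ) * L).trace
      = -4 * X + 2 * (r + star r) *
          (((star ψ ⬝ᵥ (Γ *ᵥ ψ)) - 1) * (star ψ ⬝ᵥ (L *ᵥ ψ)) + (r + star r) + sc) := by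
    rw [hS1, hS2, hS3, hS4, hXv, hrsv, hrv, hscv]
    ring
  rw [key]
  -- final numeric estimate
  set ρ := ‖r‖ with hρ
  have hρnn : 0 ≤ ρ := norm_nonneg r
  have h2r : ‖r + star r‖ ≤ 2 * ρ := by
    calc ‖r + star r‖ ≤ ‖r‖ + ‖star r‖ :=
          norm_add_le _ _
      _ = 2 * ρ := by
          rw [show (star r) = (starRingEnd ℂ) r from rfl, Complex.norm_conj]; ring
  have habs1 : ‖((star ψ ⬝ᵥ (Γ *ᵥ ψ)) - 1) * (star ψ ⬝ᵥ (L *ᵥ ψ))‖ ≤ ε * N := by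
    rw [norm_mul]
    have h1 : ‖(star ψ ⬝ᵥ (Γ *ᵥ ψ)) - 1‖ = ε := by
      rw [hd2real]
      rw [show ((((star ψ ⬝ᵥ (Γ *ᵥ ψ)).re : ℝ) : ℂ) - 1)
        = ((((star ψ ⬝ᵥ (Γ *ᵥ ψ)).re - 1 : ℝ)) : ℂ) from by push_cast; ring]
      rw [Complex.norm_real, Real.norm_eq_abs, abs_of_nonpos (by linarith [hεre, hεnn])]
      linarith [hεre]
    rw [h1]
    exact mul_le_mul_of_nonneg_left hlbound hεnn
  have hXabs : ‖-4 * X‖ = 4 * X.re := by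
    rw [norm_mul, hXreal, Complex.norm_real, Real.norm_eq_abs, abs_of_nonneg hXre_nn]
    simp
  have hinner : ‖((star ψ ⬝ᵥ (Γ *ᵥ ψ)) - 1) * (star ψ ⬝ᵥ (L *ᵥ ψ))
      + (r + star r) + sc‖ ≤ ε * N + 2 * ρ + N * ε := by
    calc ‖_‖ ≤ ‖((star ψ ⬝ᵥ (Γ *ᵥ ψ)) - 1) * (star ψ ⬝ᵥ (L *ᵥ ψ))
          + (r + star r)‖ + ‖sc‖ := norm_add_le _ _
      _ ≤ (‖((star ψ ⬝ᵥ (Γ *ᵥ ψ)) - 1) * (star ψ ⬝ᵥ (L *ᵥ ψ))‖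
          + ‖r + star r‖) + ‖sc‖ := by
          gcongr
          exact norm_add_le _ _
      _ ≤ (ε * N + 2 * ρ) + N * ε := add_le_add (add_le_add habs1 h2r) hsbound
      _ = ε * N + 2 * ρ + N * ε := by ring
  have hmain : ‖-4 * X + 2 * (r + star r) *
      (((star ψ ⬝ᵥ (Γ *ᵥ ψ)) - 1) * (star ψ ⬝ᵥ (L *ᵥ ψ)) + (r + star r) + sc)‖
      ≤ 4 * X.re + 2 * (2 * ρ) * (ε * N + 2 * ρ + N * ε) := by
    calc ‖_‖ ≤ ‖-4 * X‖ + ‖2 * (r + star r) *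
        (((star ψ ⬝ᵥ (Γ *ᵥ ψ)) - 1) * (star ψ ⬝ᵥ (L *ᵥ ψ)) + (r + star r) + sc)‖ :=
          norm_add_le _ _
      _ = 4 * X.re + 2 * (‖r + star r‖ * ‖((star ψ ⬝ᵥ (Γ *ᵥ ψ)) - 1) * (star ψ ⬝ᵥ (L *ᵥ ψ)) + (r + star r) + sc‖) := by
          rw [hXabs, norm_mul, norm_mul]
          simp [mul_assoc]
      _ ≤ 4 * X.re + 2 * ((2 * ρ) * (ε * N + 2 * ρ + N * ε)) := by
          have := mul_le_mul h2r hinner (norm_nonneg _) (by linarith : (0:ℝ) ≤ 2 * ρ)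
          linarith
      _ = 4 * X.re + 2 * (2 * ρ) * (ε * N + 2 * ρ + N * ε) := by ring
  refine hmain.trans ?_
  -- arithmetic: 4 X.re + 4ρ(εN + 2ρ + Nε) ≤ 20 N² ε
  have hd2le1 : (star ψ ⬝ᵥ (Γ *ᵥ ψ)).re ≤ 1 := by linarith [hεre, hεnn]
  have hρ2 : ρ ^ 2 ≤ N * N * ε := by
    calc ρ ^ 2 ≤ (star ψ ⬝ᵥ (Γ *ᵥ ψ)).re * X.re := hrbound
      _ ≤ 1 * (N * N * ε) := by
          apply mul_le_mul hd2le1 hXbound hXre_nn zero_le_one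
      _ = N * N * ε := by ring
  have hρN : ρ ≤ N := by nlinarith
  have hgoal : 4 * X.re + 2 * (2 * ρ) * (ε * N + 2 * ρ + N * ε) ≤ 20 * N ^ 2 * ε := by
    nlinarith [hXbound, hρ2, mul_le_mul_of_nonneg_right hρN (mul_nonneg hεnn hNnn),
      mul_nonneg hεnn hNnn, mul_nonneg hρnn hNnn]
  exact hgoal
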